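/- arXiv:1901.01378 — 2 statements merged into one kernel-verified Lean document; each statement's English description precedes it below -/
import Mathlib

section
/- For each fixed positive definite matrix A, the function f(X) = tr(A # X) is strictly concave on the set of positive definite matrices: if tr(A # ((X+Y)/2)) = (tr(A # X) + tr(A # Y))/2 then X = Y. -/
open scoped ComplexOrder
open MeasureTheory

/-- The positive semidefinite square root of a matrix (zero if not positive semidefinite). -/
noncomputable def msqrt {N : ℕ} (A : Matrix (Fin N) (Fin N) ℂ) : Matrix (Fin N) (Fin N) ℂ :=
  by classical exact if h : A.PosSemidef then
    h.1.eigenvectorUnitary.1 * Matrix.diagonal ((↑) ∘ (√·) ∘ h.1.eigenvalues) *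
      (star h.1.eigenvectorUnitary : Matrix (Fin N) (Fin N) ℂ) else 0

/-- The Pusz–Woronowicz geometric mean `A # B = A^{1/2} (A^{-1/2} B A^{-1/2})^{1/2} A^{1/2}`. -/
noncomputable def geom {N : ℕ} (A B : Matrix (Fin N) (Fin N) ℂ) : Matrix (Fin N) (Fin N) ℂ :=
  msqrt A * msqrt ((msqrt A)⁻¹ * B * (msqrt A)⁻¹) * msqrt A

/-- The logarithm of a Hermitian matrix, via the spectral theorem (zero if not Hermitian). -/
noncomputable def mlog {N : ℕ} (A : Matrix (Fin N) (Fin N) ℂ) : Matrix (Fin N) (Fin N) ℂ :=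
  by classical exact if h : A.IsHermitian then h.cfc Real.log else 0

/-- The log Euclidean mean `exp((log A + log B)/2)`. -/
noncomputable def logEuclid {N : ℕ} (A B : Matrix (Fin N) (Fin N) ℂ) : Matrix (Fin N) (Fin N) ℂ :=
  NormedSpace.exp ((2:ℂ)⁻¹ • (mlog A + mlog B))
section SqrtCompat
open Matrix
open scoped MatrixOrder

/-- The spectral square root of a positive semidefinite matrix. -/
noncomputable def Matrix.PosSemidef.sqrt {n : Type*} [Fintype n] [DecidableEq n]
    {A : Matrix n n ℂ} (h : A.PosSemidef) : Matrix n n ℂ :=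
  h.1.eigenvectorUnitary.1 * Matrix.diagonal ((↑) ∘ (√·) ∘ h.1.eigenvalues) *
    (star h.1.eigenvectorUnitary : Matrix n n ℂ)

lemma Matrix.PosSemidef.sqrt_eq_cfc {n : Type*} [Fintype n] [DecidableEq n]
    {A : Matrix n n ℂ} (h : A.PosSemidef) : h.sqrt = CFC.sqrt A := by
  rw [CFC.sqrt_eq_cfc, cfc_nnreal_eq_real _ A, h.1.cfc_eq]
  simp only [IsHermitian.cfc, Unitary.conjStarAlgAut_apply, Matrix.PosSemidef.sqrt]
  congr 3
  funext i
  simp [h.eigenvalues_nonneg i]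

lemma Matrix.PosSemidef.posSemidef_sqrt {n : Type*} [Fintype n] [DecidableEq n]
    {A : Matrix n n ℂ} (h : A.PosSemidef) : h.sqrt.PosSemidef := by
  rw [h.sqrt_eq_cfc]; exact (CFC.sqrt_nonneg A).posSemidef

lemma Matrix.PosSemidef.sqrt_mul_self {n : Type*} [Fintype n] [DecidableEq n]
    {A : Matrix n n ℂ} (h : A.PosSemidef) : h.sqrt * h.sqrt = A := by
  rw [h.sqrt_eq_cfc]; exact CFC.sqrt_mul_sqrt_self A h.nonneg

end SqrtCompat
section Aux
open Matrix
variable {n : Type*} [Fintype n] [DecidableEq n]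

lemma aux_posDef_of_isUnit {M : Matrix n n ℂ} (h : M.PosSemidef) (hu : IsUnit M) :
    M.PosDef := by
  refine PosDef.of_dotProduct_mulVec_pos h.1 fun x hx =>
    (h.dotProduct_mulVec_nonneg x).lt_of_ne' fun he => hx ?_
  have h0 : M *ᵥ x = 0 := (h.dotProduct_mulVec_zero_iff x).mp he
  have hinj := Matrix.mulVec_injective_iff_isUnit.mpr hu
  have := hinj (by simpa using h0 : M *ᵥ x = M *ᵥ 0)
  simpa using this

lemma aux_sqrt_posDef {M : Matrix n n ℂ} (h : M.PosDef) : h.posSemidef.sqrt.PosDef := by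
  apply aux_posDef_of_isUnit h.posSemidef.posSemidef_sqrt
  rw [isUnit_iff_isUnit_det]
  have hd : h.posSemidef.sqrt.det * h.posSemidef.sqrt.det = M.det := by
    rw [← det_mul, h.posSemidef.sqrt_mul_self]
  exact isUnit_of_mul_isUnit_left (y := h.posSemidef.sqrt.det) (hd ▸ h.det_pos.ne'.isUnit)

lemma aux_conj_posDef {M B : Matrix n n ℂ} (hM : M.PosDef) (hB : IsUnit B) :
    (B * M * Bᴴ).PosDef := by
  have hBH : IsUnit Bᴴ := (isUnit_iff_isUnit_det _).2 <| by
    rw [det_conjTranspose]; exact ((isUnit_iff_isUnit_det _).1 hB).star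
  refine PosDef.of_dotProduct_mulVec_pos (Matrix.isHermitian_mul_mul_conjTranspose _ hM.1)
    fun x hx => ?_
  have hxe : Bᴴ *ᵥ x ≠ 0 := fun h0 => hx <| by
    have hinj := Matrix.mulVec_injective_iff_isUnit.mpr hBH
    simpa using hinj (by simpa using h0 : Bᴴ *ᵥ x = Bᴴ *ᵥ 0)
  have := hM.dotProduct_mulVec_pos hxe
  simpa only [star_mulVec, dotProduct_mulVec, vecMul_vecMul, conjTranspose_conjTranspose,
    Matrix.mul_assoc] using this

lemma aux_smul_posSemidef {M : Matrix n n ℂ} (h : M.PosSemidef) {r : ℝ} (hr : 0 ≤ r) :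
    ((r : ℂ) • M).PosSemidef := by
  refine PosSemidef.of_dotProduct_mulVec_nonneg ?_ ?_
  · show _ = _
    rw [conjTranspose_smul, h.1.eq]
    congr 1
    simp [Complex.ext_iff]
  · intro x
    rw [smul_mulVec, dotProduct_smul]
    exact smul_nonneg (by exact_mod_cast hr) (h.dotProduct_mulVec_nonneg x)

lemma aux_trace_zero {M : Matrix n n ℂ} (h : M.PosSemidef) (ht : M.trace = 0) : M = 0 := by
  exact h.trace_eq_zero_iff.mp ht

lemma aux_sqrt_mono {P Q : Matrix n n ℂ} (hP : P.PosSemidef) (hQ : Q.PosSemidef)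
    (h : (Q * Q - P * P).PosSemidef) : (Q - P).PosSemidef := by
  by_contra hc
  have hH : (Q - P).IsHermitian := hQ.1.sub hP.1
  obtain ⟨i, hi⟩ : ∃ i, hH.eigenvalues i < 0 := by
    by_contra h'
    push_neg at h'
    exact hc (hH.posSemidef_iff_eigenvalues_nonneg.mpr h')
  set t : ℝ := hH.eigenvalues i with ht
  set v : n → ℂ := ⇑(hH.eigenvectorBasis i) with hvdef
  have hv : v ≠ 0 := fun h0 => hH.eigenvectorBasis.orthonormal.ne_zero i (by simpa [hvdef] using h0)
  have hv' : (Q - P) *ᵥ v = (t : ℂ) • v := by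
    have h1 := hH.mulVec_eigenvectorBasis i
    have h2 : (t : ℂ) • v = t • v := by ext j; simp [Complex.real_smul]
    rw [h2]
    exact h1
  have hPv : P *ᵥ v = Q *ᵥ v - (t : ℂ) • v := by
    have : Q *ᵥ v - P *ᵥ v = (t : ℂ) • v := by rw [← sub_mulVec, hv']
    linear_combination (norm := module) -this
  set w : n → ℂ := Q *ᵥ v with hw
  set a : ℂ := star v ⬝ᵥ w with ha
  set m : ℂ := star v ⬝ᵥ v with hm
  have hstarQ : star v ᵥ* Q = star w := by
    rw [hw, star_mulVec, hQ.1.eq]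
  have hstarP : star v ᵥ* P = star (P *ᵥ v) := by
    rw [star_mulVec, hP.1.eq]
  have hwv : star w ⬝ᵥ v = a := by
    rw [star_mulVec, hQ.1.eq, ha, dotProduct_mulVec]
  have hQQ : star v ⬝ᵥ (Q * Q) *ᵥ v = star w ⬝ᵥ w := by
    rw [← mulVec_mulVec, dotProduct_mulVec, hstarQ, hw]
  have hPP : star v ⬝ᵥ (P * P) *ᵥ v = star (P *ᵥ v) ⬝ᵥ (P *ᵥ v) := by
    rw [← mulVec_mulVec, dotProduct_mulVec, hstarP]
  have hexp : star (P *ᵥ v) ⬝ᵥ (P *ᵥ v)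
      = star w ⬝ᵥ w - (t : ℂ) * a - (t : ℂ) * a + (t : ℂ) ^ 2 * m := by
    rw [hPv]
    have hstar : star (w - (t : ℂ) • v) = star w - (t : ℂ) • star v := by
      ext j; simp [Complex.ext_iff, Complex.conj_ofReal]
    rw [hstar, sub_dotProduct, dotProduct_sub, dotProduct_sub, smul_dotProduct,
      dotProduct_smul, dotProduct_smul, hwv]
    simp only [smul_dotProduct, dotProduct_smul, smul_eq_mul, ← hm]
    ring
  have key := h.dotProduct_mulVec_nonneg v
  rw [sub_mulVec, dotProduct_sub, hQQ, hPP, hexp] at key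
  have key2 : (0 : ℂ) ≤ 2 * (t : ℂ) * a - (t : ℂ) ^ 2 * m := by
    have e : star w ⬝ᵥ w - (star w ⬝ᵥ w - (t:ℂ) * a - (t:ℂ) * a + (t:ℂ) ^ 2 * m)
        = 2 * (t : ℂ) * a - (t : ℂ) ^ 2 * m := by ring
    rwa [e] at key
  have ha0 : 0 ≤ a := hQ.dotProduct_mulVec_nonneg v
  have hm0 : 0 < m := dotProduct_star_self_pos_iff.mpr hv
  have hre : (2 * (t : ℂ) * a - (t : ℂ) ^ 2 * m).re = 2 * t * a.re - t ^ 2 * m.re := by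
    have e1 : 2 * (t : ℂ) * a = ((2 * t : ℝ) : ℂ) * a := by push_cast; ring
    have e2 : (t : ℂ) ^ 2 * m = ((t ^ 2 : ℝ) : ℂ) * m := by push_cast; ring
    rw [Complex.sub_re, e1, e2, Complex.re_ofReal_mul, Complex.re_ofReal_mul]
  rw [Complex.le_def] at key2 ha0
  rw [Complex.lt_def] at hm0
  have hmre : 0 < m.re := by simpa using hm0.1
  have hare : 0 ≤ a.re := by simpa using ha0.1
  have hkey : (0:ℝ) ≤ 2 * t * a.re - t ^ 2 * m.re := by
    have := key2.1
    rw [hre] at this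
    simpa using this
  nlinarith [mul_nonneg (neg_nonneg.mpr hi.le) hare,
    mul_pos (mul_pos (neg_pos.mpr hi) (neg_pos.mpr hi)) hmre]


end Aux

section Main
open Matrix

set_option maxHeartbeats 1000000 in
/-- For fixed positive definite `A`, `X ↦ tr(A # X)` is strictly concave on positive definite
matrices: midpoint equality of traces forces `X = Y`. -/
theorem stmt12 {N : ℕ} (A X Y : Matrix (Fin N) (Fin N) ℂ)
    (hA : A.PosDef) (hX : X.PosDef) (hY : Y.PosDef)
    (h : (geom A ((2:ℂ)⁻¹ • (X + Y))).trace
        = ((geom A X).trace + (geom A Y).trace) / 2) :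
    X = Y := by
  classical
  set B : Matrix (Fin N) (Fin N) ℂ := hA.posSemidef.sqrt with hBdef
  have hB : B.PosDef := aux_sqrt_posDef hA
  have hBH : Bᴴ = B := hA.posSemidef.posSemidef_sqrt.1
  have hBdet : IsUnit B.det := hB.det_pos.ne'.isUnit
  have hBu : IsUnit B := (Matrix.isUnit_iff_isUnit_det _).2 hBdet
  have hBinv : B⁻¹.PosDef := hB.inv
  have hBinvu : IsUnit B⁻¹ := Matrix.isUnit_nonsing_inv_iff.2 hBu
  have hconj : ∀ {M : Matrix (Fin N) (Fin N) ℂ}, M.PosDef → (B⁻¹ * M * B⁻¹).PosDef := by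
    intro M hM
    have := aux_conj_posDef hM hBinvu
    rwa [hBinv.1.eq] at this
  have h2c : (2:ℂ)⁻¹ = ((2⁻¹ : ℝ) : ℂ) := by norm_num
  have h4c : (4:ℂ)⁻¹ = ((4⁻¹ : ℝ) : ℂ) := by norm_num
  have hZ : (B⁻¹ * X * B⁻¹).PosDef := hconj hX
  have hW : (B⁻¹ * Y * B⁻¹).PosDef := hconj hY
  set Z : Matrix (Fin N) (Fin N) ℂ := B⁻¹ * X * B⁻¹ with hZdef
  set W : Matrix (Fin N) (Fin N) ℂ := B⁻¹ * Y * B⁻¹ with hWdef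
  have hMid : ((2:ℂ)⁻¹ • (X + Y)).PosSemidef := by
    rw [h2c]
    exact aux_smul_posSemidef (hX.posSemidef.add hY.posSemidef) (by norm_num)
  have hM : (B⁻¹ * ((2:ℂ)⁻¹ • (X + Y)) * B⁻¹).PosSemidef := by
    have := hMid.mul_mul_conjTranspose_same B⁻¹
    rwa [hBinv.1.eq] at this
  have hMeq : B⁻¹ * ((2:ℂ)⁻¹ • (X + Y)) * B⁻¹ = (2:ℂ)⁻¹ • (Z + W) := by
    rw [hZdef, hWdef]
    simp only [Matrix.mul_smul, Matrix.smul_mul, Matrix.mul_add, Matrix.add_mul]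
  -- unfold geom and msqrt
  have hmsA : msqrt A = B := by unfold msqrt; exact dif_pos hA.posSemidef
  set S : Matrix (Fin N) (Fin N) ℂ := hZ.posSemidef.sqrt with hSdef
  set T : Matrix (Fin N) (Fin N) ℂ := hW.posSemidef.sqrt with hTdef
  set R : Matrix (Fin N) (Fin N) ℂ := hM.sqrt with hRdef
  have hgX : geom A X = B * S * B := by
    unfold geom
    rw [hmsA, hSdef]
    congr 1
    congr 1
    unfold msqrt
    exact dif_pos hZ.posSemidef
  have hgY : geom A Y = B * T * B := by
    unfold geom
    rw [hmsA, hTdef]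
    congr 1
    congr 1
    unfold msqrt
    exact dif_pos hW.posSemidef
  have hgM : geom A ((2:ℂ)⁻¹ • (X + Y)) = B * R * B := by
    unfold geom
    rw [hmsA, hRdef]
    congr 1
    congr 1
    unfold msqrt
    exact dif_pos hM
  have hS_psd : S.PosSemidef := hZ.posSemidef.posSemidef_sqrt
  have hT_psd : T.PosSemidef := hW.posSemidef.posSemidef_sqrt
  have hR_psd : R.PosSemidef := hM.posSemidef_sqrt
  have hSS : S * S = Z := hZ.posSemidef.sqrt_mul_self
  have hTT : T * T = W := hW.posSemidef.sqrt_mul_self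
  have hRR : R * R = (2:ℂ)⁻¹ • (Z + W) := by
    rw [hRdef, hM.sqrt_mul_self, hMeq]
  clear_value B Z W S T R
  set U : Matrix (Fin N) (Fin N) ℂ := (2:ℂ)⁻¹ • (S + T) with hUdef
  clear_value U
  have hU_psd : U.PosSemidef := by
    rw [hUdef, h2c]
    exact aux_smul_posSemidef (hS_psd.add hT_psd) (by norm_num)
  have hST_herm : (S - T).IsHermitian := hS_psd.1.sub hT_psd.1
  have hSTsq_psd : ((S - T) * (S - T)).PosSemidef := by
    have := Matrix.posSemidef_conjTranspose_mul_self (S - T)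
    rwa [hST_herm.eq] at this
  have hdiff : R * R - U * U = (4:ℂ)⁻¹ • ((S - T) * (S - T)) := by
    rw [hRR, hUdef, ← hSS, ← hTT]
    rw [smul_mul_smul_comm]
    simp only [Matrix.mul_add, Matrix.add_mul, Matrix.sub_mul, Matrix.mul_sub, smul_add,
      smul_sub]
    module
  have hdiff_psd : (R * R - U * U).PosSemidef := by
    rw [hdiff, h4c]
    exact aux_smul_posSemidef hSTsq_psd (by norm_num)
  have hE_psd : (R - U).PosSemidef := aux_sqrt_mono hU_psd hR_psd hdiff_psd
  have hBEB_psd : (B * (R - U) * B).PosSemidef := by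
    have := hE_psd.mul_mul_conjTranspose_same B
    rwa [hBH] at this
  have hBEB_trace : (B * (R - U) * B).trace = 0 := by
    have hexp : B * (R - U) * B = B * R * B - (2:ℂ)⁻¹ • (B * S * B + B * T * B) := by
      rw [hUdef]
      simp only [Matrix.mul_sub, Matrix.sub_mul, Matrix.mul_smul, Matrix.smul_mul,
        Matrix.mul_add, Matrix.add_mul]
    rw [hexp, Matrix.trace_sub, Matrix.trace_smul, Matrix.trace_add]
    rw [hgM, hgX, hgY] at h
    rw [h]
    field_simp
    rw [smul_eq_mul]; ring
  have hBEB : B * (R - U) * B = 0 := aux_trace_zero hBEB_psd hBEB_trace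
  have hRU : R - U = 0 := by
    have : B⁻¹ * (B * (R - U) * B) * B⁻¹ = R - U := by
      rw [Matrix.mul_assoc B (R - U) B, Matrix.nonsing_inv_mul_cancel_left _ _ hBdet,
        Matrix.mul_nonsing_inv_cancel_right _ _ hBdet]
    rw [← this, hBEB, Matrix.mul_zero, Matrix.zero_mul]
  have hSTsq : (S - T) * (S - T) = 0 := by
    have h0 : R * R - U * U = 0 := by
      rw [sub_eq_zero] at hRU
      rw [hRU, sub_self]
    rw [hdiff] at h0
    have h4 : (4:ℂ)⁻¹ ≠ 0 := by norm_num
    exact (smul_eq_zero.mp h0).resolve_left h4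
  have hST : S = T := by
    have : (S - T)ᴴ * (S - T) = 0 := by rw [hST_herm.eq]; exact hSTsq
    have := Matrix.conjTranspose_mul_self_eq_zero.mp this
    rwa [sub_eq_zero] at this
  have hZW : Z = W := by rw [← hSS, ← hTT, hST]
  have hcancel : ∀ E : Matrix (Fin N) (Fin N) ℂ, B * (B⁻¹ * E * B⁻¹) * B = E := fun E => by
    rw [Matrix.mul_assoc B⁻¹ E B⁻¹, Matrix.mul_nonsing_inv_cancel_left _ _ hBdet,
      Matrix.nonsing_inv_mul_cancel_right _ _ hBdet]
  have : B * Z * B = B * W * B := by rw [hZW]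
  rw [hZdef, hWdef, hcancel X, hcancel Y] at this
  exact this

end Main
end

section
/- If A, X, Y are positive definite matrices and A # ((X+Y)/2) = (A # X + A # Y)/2, then X = Y. -/
open scoped ComplexOrder
open MeasureTheory

lemma msqrt_eq {n : ℕ} {M : Matrix (Fin n) (Fin n) ℂ} (hM : M.PosSemidef) :
    msqrt M = hM.1.eigenvectorUnitary.1 * Matrix.diagonal ((↑) ∘ (√·) ∘ hM.1.eigenvalues) *
    (star hM.1.eigenvectorUnitary : Matrix (Fin n) (Fin n) ℂ) := by unfold msqrt; exact dif_pos hM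

lemma msqrt_mul_self {n : ℕ} {M : Matrix (Fin n) (Fin n) ℂ} (hM : M.PosSemidef) :
    msqrt M * msqrt M = M := by
  rw [msqrt_eq hM]
  set U := hM.1.eigenvectorUnitary
  have hU : (star U : Matrix (Fin n) (Fin n) ℂ) * U = 1 := Unitary.coe_star_mul_self U
  have hD : Matrix.diagonal (((↑) ∘ (√·) ∘ hM.1.eigenvalues) : Fin n → ℂ) *
      Matrix.diagonal ((↑) ∘ (√·) ∘ hM.1.eigenvalues) =
      Matrix.diagonal (RCLike.ofReal ∘ hM.1.eigenvalues) := by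
    rw [Matrix.diagonal_mul_diagonal]
    congr 1
    funext i
    simp only [Function.comp_apply]
    rw [← Complex.ofReal_mul, Real.mul_self_sqrt (hM.eigenvalues_nonneg i)]
    rfl
  conv_rhs => rw [hM.1.spectral_theorem, Unitary.conjStarAlgAut_apply]
  simp only [Matrix.mul_assoc]
  rw [← Matrix.mul_assoc (star U : Matrix (Fin n) (Fin n) ℂ) (U : Matrix (Fin n) (Fin n) ℂ), hU,
    Matrix.one_mul, ← Matrix.mul_assoc (Matrix.diagonal _) (Matrix.diagonal _), hD]

lemma msqrt_herm {n : ℕ} {M : Matrix (Fin n) (Fin n) ℂ} (hM : M.PosSemidef) :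
    (msqrt M).IsHermitian := by
  rw [msqrt_eq hM]
  have hf : star (Complex.ofReal ∘ (fun x : ℝ => √x) ∘ hM.1.eigenvalues) =
      Complex.ofReal ∘ (fun x : ℝ => √x) ∘ hM.1.eigenvalues := by
    funext i; simp
  simp only [Matrix.IsHermitian, Matrix.conjTranspose_mul, Matrix.diagonal_conjTranspose, hf,
    ← Matrix.star_eq_conjTranspose, star_star, Matrix.mul_assoc]
  rw [star_mul, star_mul, star_star, Matrix.star_eq_conjTranspose (Matrix.diagonal _),
    Matrix.diagonal_conjTranspose, hf, Matrix.mul_assoc]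

lemma psd_smul {n : ℕ} {M : Matrix (Fin n) (Fin n) ℂ} (hM : M.PosSemidef) {c : ℝ} (hc : 0 ≤ c) :
    (((c:ℂ)) • M).PosSemidef := by
  constructor
  · rw [Matrix.IsHermitian, Matrix.conjTranspose_smul, hM.1]
    simp
  · intro x
    exact (hM.smul (a := (c:ℂ)) (by exact_mod_cast hc)).2 x

theorem stmt13 {N : ℕ} (A X Y : Matrix (Fin N) (Fin N) ℂ)
    (hA : A.PosDef) (hX : X.PosDef) (hY : Y.PosDef)
    (h : geom A ((2:ℂ)⁻¹ • (X + Y)) = (2:ℂ)⁻¹ • (geom A X + geom A Y)) :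
    X = Y := by
  set B := msqrt A with hBdef
  have hApsd := hA.posSemidef
  have hB2 : B * B = A := msqrt_mul_self hApsd
  have hBH : B.IsHermitian := msqrt_herm hApsd
  have hBdet : B.det ≠ 0 := by
    intro h0
    have : A.det = 0 := by rw [← hB2, Matrix.det_mul, h0, mul_zero]
    exact hA.det_pos.ne' this
  have hBiH : (B⁻¹).IsHermitian := hBH.inv
  set S := B⁻¹ * X * B⁻¹ with hSdef
  set T := B⁻¹ * Y * B⁻¹ with hTdef
  have hS : S.PosSemidef := by
    have := hX.posSemidef.conjTranspose_mul_mul_same B⁻¹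
    rwa [hBiH.eq] at this
  have hT : T.PosSemidef := by
    have := hY.posSemidef.conjTranspose_mul_mul_same B⁻¹
    rwa [hBiH.eq] at this
  have hBu : IsUnit B.det := isUnit_iff_ne_zero.mpr hBdet
  have hMrw : B⁻¹ * ((2:ℂ)⁻¹ • (X + Y)) * B⁻¹ = (2:ℂ)⁻¹ • (S + T) := by
    simp only [Matrix.mul_smul, Matrix.smul_mul, smul_add, Matrix.mul_add, Matrix.add_mul,
      hSdef, hTdef]
  have hM : ((2:ℂ)⁻¹ • (S + T)).PosSemidef := by
    have : ((2:ℂ)⁻¹) = ((2⁻¹ : ℝ) : ℂ) := by norm_num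
    rw [this]
    exact psd_smul (hS.add hT) (by norm_num)
  set P := msqrt S with hPdef
  set Q := msqrt T with hQdef
  have hP2 : P * P = S := msqrt_mul_self hS
  have hQ2 : Q * Q = T := msqrt_mul_self hT
  -- extract the core equation
  have cancel : ∀ U V : Matrix (Fin N) (Fin N) ℂ, B * U * B = B * V * B → U = V := by
    intro U V hUV
    have := congrArg (fun Z => B⁻¹ * Z * B⁻¹) hUV
    simpa only [Matrix.mul_assoc, Matrix.nonsing_inv_mul_cancel_left _ _ hBu,
      Matrix.mul_nonsing_inv_cancel_left _ _ hBu,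
      Matrix.mul_nonsing_inv _ hBu, Matrix.mul_one] using this
  have hEq : msqrt ((2:ℂ)⁻¹ • (S + T)) = (2:ℂ)⁻¹ • (P + Q) := by
    apply cancel
    have hrhs : (2:ℂ)⁻¹ • (geom A X + geom A Y) = B * ((2:ℂ)⁻¹ • (P + Q)) * B := by
      simp only [geom, ← hBdef, ← hPdef, ← hQdef, ← hSdef, ← hTdef,
        Matrix.mul_smul, Matrix.smul_mul, smul_add, Matrix.mul_add, Matrix.add_mul]
    rw [← hrhs, ← h]
    simp only [geom, ← hBdef, hMrw]
  -- square both sides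
  have key : ((2:ℂ)⁻¹ • (P + Q)) * ((2:ℂ)⁻¹ • (P + Q)) = (2:ℂ)⁻¹ • (S + T) := by
    rw [← hEq]; exact msqrt_mul_self hM
  have key2 : (P + Q) * (P + Q) = (2:ℂ) • (S + T) := by
    rw [smul_mul_smul_comm] at key
    have h4 := congrArg (fun Z => ((4:ℂ)) • Z) key
    simp only [smul_smul] at h4
    norm_num at h4
    calc (P + Q) * (P + Q) = (1:ℂ) • ((P + Q) * (P + Q)) := (one_smul _ _).symm
      _ = ((4:ℂ) * (2⁻¹ * 2⁻¹)) • ((P + Q) * (P + Q)) := by norm_num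
      _ = (4:ℂ) • ((2⁻¹ * 2⁻¹ : ℂ) • ((P + Q) * (P + Q))) := by rw [smul_smul]
      _ = (4:ℂ) • ((2:ℂ)⁻¹ • (S + T)) := by rw [key]
      _ = (2:ℂ) • (S + T) := by rw [smul_smul]; norm_num
  have hsq : (P - Q) * (P - Q) = 0 := by
    have expand : (P - Q) * (P - Q) + (P + Q) * (P + Q) = (2:ℂ) • (S + T) := by
      rw [two_smul]
      simp only [mul_sub, sub_mul, mul_add, add_mul, hP2, hQ2]
      abel
    rw [key2] at expand
    linear_combination (norm := abel) expand
  have hPQH : (P - Q).IsHermitian := (msqrt_herm hS).sub (msqrt_herm hT)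
  have hPQ : P - Q = 0 := by
    rw [← Matrix.conjTranspose_mul_self_eq_zero (A := P - Q), hPQH.eq, hsq]
  have hPQ' : P = Q := sub_eq_zero.mp hPQ
  have hST : S = T := by rw [← hP2, ← hQ2, hPQ']
  have : B * S * B = B * T * B := by rw [hST]
  rw [hSdef, hTdef] at this
  simpa only [Matrix.mul_assoc, Matrix.mul_nonsing_inv_cancel_left _ _ hBu,
    Matrix.nonsing_inv_mul_cancel_left _ _ hBu, Matrix.mul_nonsing_inv _ hBu, Matrix.nonsing_inv_mul _ hBu,
    Matrix.mul_one] using this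
end
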